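/- arXiv:1410.0116 — 3 statements merged into one kernel-verified Lean document; each statement's English description precedes it below -/
import Mathlib

section
/- Let A, A' ∈ ℂ^{n×n} with ‖A‖_F = ‖A'‖_F = 1, let v, v' ∈ ℂ^n be nonzero, and let λ, λ' ∈ ℂ be such that Av = λv and A_{λ,v} is invertible. Suppose that μ(A,λ,v) · dist((A,λ,v),(A',λ',v')) ≤ ε/12.5 for some 0 < ε < 0.37. Then A'_{λ',v'} is invertible and μ(A,λ,v)/(1+ε) ≤ μ(A',λ',v') ≤ (1+ε) · μ(A,λ,v). -/
noncomputable section

open Matrix Set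

/-- `T_v`: the orthogonal complement of `v` in `ℂ^n`. -/
def Tv {n : ℕ} (v : EuclideanSpace ℂ (Fin n)) : Submodule ℂ (EuclideanSpace ℂ (Fin n)) :=
  (ℂ ∙ v)ᗮ

/-- The linear map `A_{λ,v} : T_v → T_v`, `x ↦ P_{v⊥}((A - λ·Id) x)`. -/
def Alv {n : ℕ} (A : Matrix (Fin n) (Fin n) ℂ) (lam : ℂ) (v : EuclideanSpace ℂ (Fin n)) :
    Tv v →ₗ[ℂ] Tv v :=
  (Tv v).orthogonalProjectionOnto.toLinearMap ∘ₗ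
    (Matrix.toEuclideanLin A - lam • LinearMap.id) ∘ₗ (Tv v).subtype

/-- `A_{λ,v}` as a continuous linear map. -/
def AlvC {n : ℕ} (A : Matrix (Fin n) (Fin n) ℂ) (lam : ℂ) (v : EuclideanSpace ℂ (Fin n)) :
    Tv v →L[ℂ] Tv v :=
  LinearMap.toContinuousLinearMap (Alv A lam v)

/-- Frobenius norm of a complex matrix. -/
def frobNorm {n : ℕ} (A : Matrix (Fin n) (Fin n) ℂ) : ℝ :=
  Real.sqrt (∑ i, ∑ j, ‖A i j‖ ^ 2)

/-- The condition number `μ(A,λ,v) = ‖A‖_F ‖A_{λ,v}^{-1}‖`. -/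
def mu {n : ℕ} (A : Matrix (Fin n) (Fin n) ℂ) (lam : ℂ) (v : EuclideanSpace ℂ (Fin n)) : ℝ :=
  frobNorm A * ‖(AlvC A lam v).inverse‖

/-- Fubini-Study (angular) distance. -/
def dP {n : ℕ} (v w : EuclideanSpace ℂ (Fin n)) : ℝ :=
  Real.arccos (‖(inner ℂ v w : ℂ)‖ / (‖v‖ * ‖w‖))

/-- The distance on triples. -/
def distT {n : ℕ} (A : Matrix (Fin n) (Fin n) ℂ) (lam : ℂ) (v : EuclideanSpace ℂ (Fin n))
    (A' : Matrix (Fin n) (Fin n) ℂ) (lam' : ℂ) (v' : EuclideanSpace ℂ (Fin n)) : ℝ :=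
  Real.sqrt ((frobNorm ((frobNorm A)⁻¹ • A - (frobNorm A')⁻¹ • A')) ^ 2 +
    ‖lam / (frobNorm A : ℂ) - lam' / (frobNorm A' : ℂ)‖ ^ 2 + dP v v' ^ 2)

/-! ### Auxiliary lemmas -/

section Aux

set_option linter.unusedSectionVars false

lemma frobNorm_nonneg {n : ℕ} (A : Matrix (Fin n) (Fin n) ℂ) : 0 ≤ frobNorm A :=
  Real.sqrt_nonneg _

lemma frobNorm_sub_rev {n : ℕ} (A B : Matrix (Fin n) (Fin n) ℂ) :
    frobNorm (A - B) = frobNorm (B - A) := by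
  unfold frobNorm
  congr 1
  refine Finset.sum_congr rfl fun i _ => Finset.sum_congr rfl fun j _ => ?_
  rw [Matrix.sub_apply, Matrix.sub_apply, norm_sub_rev]

lemma toEuclideanLin_norm_le {n : ℕ} (M : Matrix (Fin n) (Fin n) ℂ)
    (x : EuclideanSpace ℂ (Fin n)) :
    ‖Matrix.toEuclideanLin M x‖ ≤ frobNorm M * ‖x‖ := by
  have hcomp : ∀ i, ‖(Matrix.toEuclideanLin M x) i‖ ^ 2 ≤ (∑ j, ‖M i j‖ ^ 2) * ‖x‖ ^ 2 := by
    intro i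
    set a : EuclideanSpace ℂ (Fin n) := (WithLp.equiv 2 _).symm (fun j => star (M i j)) with ha
    have h1 : (Matrix.toEuclideanLin M x) i = inner ℂ a x := by
      simp [Matrix.toEuclideanLin_apply, PiLp.inner_apply, a, Matrix.mulVec, dotProduct, mul_comm]
    have h2 : ‖(inner ℂ a x : ℂ)‖ ≤ ‖a‖ * ‖x‖ := norm_inner_le_norm a x
    have h3 : ‖a‖ ^ 2 = ∑ j, ‖M i j‖ ^ 2 := by
      rw [EuclideanSpace.norm_eq]
      rw [Real.sq_sqrt (by positivity)]
      simp [a]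
    calc ‖(Matrix.toEuclideanLin M x) i‖ ^ 2 = ‖(inner ℂ a x : ℂ)‖ ^ 2 := by rw [h1]
      _ ≤ (‖a‖ * ‖x‖) ^ 2 := by
          have := norm_nonneg (inner ℂ a x : ℂ); nlinarith [h2]
      _ = (∑ j, ‖M i j‖ ^ 2) * ‖x‖ ^ 2 := by rw [mul_pow, h3]
  have hsq : ‖Matrix.toEuclideanLin M x‖ ^ 2 ≤ (∑ i, ∑ j, ‖M i j‖ ^ 2) * ‖x‖ ^ 2 := by
    rw [EuclideanSpace.norm_eq, Real.sq_sqrt (by positivity)]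
    calc (∑ i, ‖(Matrix.toEuclideanLin M x) i‖ ^ 2)
        ≤ ∑ i, (∑ j, ‖M i j‖ ^ 2) * ‖x‖ ^ 2 := Finset.sum_le_sum fun i _ => hcomp i
      _ = (∑ i, ∑ j, ‖M i j‖ ^ 2) * ‖x‖ ^ 2 := by rw [Finset.sum_mul]
  have h4 : frobNorm M * ‖x‖ = Real.sqrt ((∑ i, ∑ j, ‖M i j‖ ^ 2) * ‖x‖ ^ 2) := by
    rw [frobNorm, Real.sqrt_mul (by positivity), Real.sqrt_sq (norm_nonneg x)]
  rw [h4]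
  calc ‖Matrix.toEuclideanLin M x‖ = Real.sqrt (‖Matrix.toEuclideanLin M x‖ ^ 2) := by
        rw [Real.sqrt_sq (norm_nonneg _)]
    _ ≤ _ := Real.sqrt_le_sqrt hsq

lemma chord_le_arccos {c : ℝ} (h0 : -1 ≤ c) (h1 : c ≤ 1) :
    Real.sqrt (2 - 2 * c) ≤ Real.arccos c := by
  set θ := Real.arccos c with hθ
  have hθ0 : 0 ≤ θ := Real.arccos_nonneg c
  have hθπ : θ ≤ Real.pi := Real.arccos_le_pi c
  have hcos : Real.cos θ = c := Real.cos_arccos h0 h1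
  have hhalf : Real.sin (θ / 2) ^ 2 = (1 - c) / 2 := by
    have h3 := Real.cos_sq (θ / 2)
    have h2 : 2 * (θ / 2) = θ := by ring
    have hs := Real.sin_sq_add_cos_sq (θ / 2)
    rw [h2, hcos] at h3
    nlinarith
  have hsin_nonneg : 0 ≤ Real.sin (θ / 2) :=
    Real.sin_nonneg_of_nonneg_of_le_pi (by linarith) (by linarith)
  have hsin_le : Real.sin (θ / 2) ≤ θ / 2 := Real.sin_le (by linarith)
  have key : 2 - 2 * c ≤ θ ^ 2 := by nlinarith
  calc Real.sqrt (2 - 2 * c) ≤ Real.sqrt (θ ^ 2) := Real.sqrt_le_sqrt key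
    _ = θ := Real.sqrt_sq hθ0

variable {n : ℕ}

local notation "E" => EuclideanSpace ℂ (Fin n)
local notation "⟪" x ", " y "⟫" => @inner ℂ _ _ x y

lemma norm_triple_sq (u w z : E) (hu : ‖u‖ = 1) (hw : ‖w‖ = 1)
    (huw : ⟪u, w⟫ = 0) (huz : ⟪u, z⟫ = 0) (hwz : ⟪w, z⟫ = 0) (α β : ℂ) :
    ‖α • u + β • w + z‖ ^ 2 = ‖α‖ ^ 2 + ‖β‖ ^ 2 + ‖z‖ ^ 2 := by
  have h1 : ⟪α • u + β • w, z⟫ = 0 := by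
    rw [inner_add_left, inner_smul_left, inner_smul_left, huz, hwz]; ring
  have h2 : ⟪α • u, β • w⟫ = 0 := by
    rw [inner_smul_left, inner_smul_right, huw]; ring
  have e1 := @norm_add_sq ℂ _ _ _ _ (α • u + β • w) z
  rw [h1] at e1
  have e2 := @norm_add_sq ℂ _ _ _ _ (α • u) (β • w)
  rw [h2] at e2
  simp only [map_zero, mul_zero, add_zero, zero_mul] at e1 e2
  rw [e1, e2, norm_smul, norm_smul, hu, hw]
  ring

lemma cnormsq (z : ℂ) : ‖z‖ ^ 2 = z.re ^ 2 + z.im ^ 2 := by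
  rw [Complex.sq_norm, Complex.normSq_apply]; ring

lemma rot_norm (c s : ℝ) (h : c ^ 2 + s ^ 2 = 1) (a b : ℂ) :
    ‖(c : ℂ) * a - (s : ℂ) * b‖ ^ 2 + ‖(s : ℂ) * a + (c : ℂ) * b‖ ^ 2
      = ‖a‖ ^ 2 + ‖b‖ ^ 2 := by
  simp only [cnormsq, Complex.sub_re, Complex.sub_im, Complex.add_re, Complex.add_im,
    Complex.mul_re, Complex.mul_im, Complex.ofReal_re, Complex.ofReal_im]
  ring_nf
  nlinarith [h]

lemma rot_diff_norm (c s : ℝ) (a b : ℂ) :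
    ‖((c : ℂ) - 1) * a - (s : ℂ) * b‖ ^ 2 + ‖(s : ℂ) * a + ((c : ℂ) - 1) * b‖ ^ 2
      = ((c - 1) ^ 2 + s ^ 2) * (‖a‖ ^ 2 + ‖b‖ ^ 2) := by
  simp only [cnormsq, Complex.sub_re, Complex.sub_im, Complex.add_re, Complex.add_im,
    Complex.mul_re, Complex.mul_im, Complex.ofReal_re, Complex.ofReal_im,
    Complex.one_re, Complex.one_im]
  ring

set_option maxHeartbeats 1000000 in
lemma rotation_isometry (u w : E) (hu : ‖u‖ = 1) (hw : ‖w‖ = 1) (huw : ⟪u, w⟫ = 0)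
    (c s : ℝ) (hcs1 : c ^ 2 + s ^ 2 = 1) :
    ∃ U : E ≃ₗᵢ[ℂ] E, U u = (c : ℂ) • u + (s : ℂ) • w ∧
      ∀ x : E, ‖U x - x‖ ≤ Real.sqrt (2 - 2 * c) * ‖x‖ := by
  have huu : ⟪u, u⟫ = 1 := by
    rw [inner_self_eq_norm_sq_to_K, hu]; norm_num
  have hww : ⟪w, w⟫ = 1 := by
    rw [inner_self_eq_norm_sq_to_K, hw]; norm_num
  have hwu : ⟪w, u⟫ = 0 := inner_eq_zero_symm.mp huw
  have hc1 : c ≤ 1 := by nlinarith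
  set G : EuclideanSpace ℂ (Fin n) →L[ℂ] EuclideanSpace ℂ (Fin n) :=
    ContinuousLinearMap.id ℂ _
    + ((((c:ℂ)-1) • (innerSL ℂ u) + (-(s:ℂ)) • (innerSL ℂ w)).smulRight u)
    + (((s:ℂ) • (innerSL ℂ u) + (((c:ℂ)-1)) • (innerSL ℂ w)).smulRight w) with hG_def
  have hGapp : ∀ x : E, G x = x + (((c:ℂ)-1) * ⟪u,x⟫ - (s:ℂ) * ⟪w,x⟫) • u
      + ((s:ℂ) * ⟪u,x⟫ + ((c:ℂ)-1) * ⟪w,x⟫) • w := by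
    intro x
    simp only [hG_def, ContinuousLinearMap.add_apply, ContinuousLinearMap.id_apply,
      ContinuousLinearMap.smulRight_apply, ContinuousLinearMap.coe_smul',
      Pi.smul_apply, innerSL_apply_apply, smul_eq_mul]
    module
  have hdec : ∀ x : E, x = ⟪u,x⟫ • u + ⟪w,x⟫ • w + (x - ⟪u,x⟫ • u - ⟪w,x⟫ • w) := by
    intro x; module
  have hzu : ∀ x : E, ⟪u, x - ⟪u,x⟫ • u - ⟪w,x⟫ • w⟫ = 0 := by
    intro x
    rw [inner_sub_right, inner_sub_right, inner_smul_right, inner_smul_right, huu, huw]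
    ring
  have hzw : ∀ x : E, ⟪w, x - ⟪u,x⟫ • u - ⟪w,x⟫ • w⟫ = 0 := by
    intro x
    rw [inner_sub_right, inner_sub_right, inner_smul_right, inner_smul_right, hww, hwu]
    ring
  have hGx : ∀ x : E, G x = ((c:ℂ) * ⟪u,x⟫ - (s:ℂ) * ⟪w,x⟫) • u
      + ((s:ℂ) * ⟪u,x⟫ + (c:ℂ) * ⟪w,x⟫) • w + (x - ⟪u,x⟫ • u - ⟪w,x⟫ • w) := by
    intro x; rw [hGapp]; module
  have hnorm : ∀ x : E, ‖G x‖ = ‖x‖ := by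
    intro x
    have e1 : ‖G x‖ ^ 2 = ‖(c:ℂ) * ⟪u,x⟫ - (s:ℂ) * ⟪w,x⟫‖ ^ 2
        + ‖(s:ℂ) * ⟪u,x⟫ + (c:ℂ) * ⟪w,x⟫‖ ^ 2 + ‖x - ⟪u,x⟫ • u - ⟪w,x⟫ • w‖ ^ 2 := by
      rw [hGx x]
      exact norm_triple_sq u w _ hu hw huw (hzu x) (hzw x) _ _
    have e2 : ‖x‖ ^ 2 = ‖(⟪u,x⟫ : ℂ)‖ ^ 2 + ‖(⟪w,x⟫ : ℂ)‖ ^ 2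
        + ‖x - ⟪u,x⟫ • u - ⟪w,x⟫ • w‖ ^ 2 := by
      conv_lhs => rw [hdec x]
      exact norm_triple_sq u w _ hu hw huw (hzu x) (hzw x) _ _
    have e3 := rot_norm c s hcs1 ⟪u,x⟫ ⟪w,x⟫
    have esq : ‖G x‖ ^ 2 = ‖x‖ ^ 2 := by rw [e1, e2, e3]
    have := congrArg Real.sqrt esq
    rwa [Real.sqrt_sq (norm_nonneg _), Real.sqrt_sq (norm_nonneg _)] at this
  set Li : EuclideanSpace ℂ (Fin n) →ₗᵢ[ℂ] EuclideanSpace ℂ (Fin n) :=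
    ⟨(G : EuclideanSpace ℂ (Fin n) →ₗ[ℂ] EuclideanSpace ℂ (Fin n)), hnorm⟩ with hLi_def
  have hsurj : Function.Surjective Li := by
    have hinj : Function.Injective Li.toLinearMap := Li.injective
    exact LinearMap.injective_iff_surjective.mp hinj
  refine ⟨LinearIsometryEquiv.ofSurjective Li hsurj, ?_, ?_⟩
  · have hUG : (LinearIsometryEquiv.ofSurjective Li hsurj) u = G u := rfl
    rw [hUG, hGx u, huu, hwu]
    module
  · intro x
    have hUG : (LinearIsometryEquiv.ofSurjective Li hsurj) x = G x := rfl
    rw [hUG]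
    have ed : G x - x = ((((c:ℂ)-1) * ⟪u,x⟫ - (s:ℂ) * ⟪w,x⟫) • u
        + (((s:ℂ) * ⟪u,x⟫ + ((c:ℂ)-1) * ⟪w,x⟫) • w) + (0:EuclideanSpace ℂ (Fin n))) := by
      rw [hGapp]; module
    have e3 : ‖G x - x‖ ^ 2 = ((c-1)^2 + s^2) * (‖(⟪u,x⟫ : ℂ)‖^2 + ‖(⟪w,x⟫ : ℂ)‖^2) := by
      rw [ed, norm_triple_sq u w 0 hu hw huw (inner_zero_right u) (inner_zero_right w),
        norm_zero]
      rw [← rot_diff_norm c s ⟪u,x⟫ ⟪w,x⟫]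
      ring
    have e2 : ‖x‖ ^ 2 = ‖(⟪u,x⟫ : ℂ)‖ ^ 2 + ‖(⟪w,x⟫ : ℂ)‖ ^ 2
        + ‖x - ⟪u,x⟫ • u - ⟪w,x⟫ • w‖ ^ 2 := by
      conv_lhs => rw [hdec x]
      exact norm_triple_sq u w _ hu hw huw (hzu x) (hzw x) _ _
    have e4 : ‖(⟪u,x⟫ : ℂ)‖ ^ 2 + ‖(⟪w,x⟫ : ℂ)‖ ^ 2 ≤ ‖x‖ ^ 2 := by
      nlinarith [sq_nonneg ‖x - ⟪u,x⟫ • u - ⟪w,x⟫ • w‖]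
    have e5 : ‖G x - x‖ ^ 2 ≤ (2 - 2*c) * ‖x‖ ^ 2 := by
      have h7 : (c-1)^2 + s^2 = 2 - 2*c := by nlinarith
      rw [e3, h7]
      have h8 : (0:ℝ) ≤ 2 - 2*c := by linarith
      nlinarith
    have := Real.sqrt_le_sqrt e5
    rwa [Real.sqrt_sq (norm_nonneg _), Real.sqrt_mul (by linarith) (‖x‖^2),
      Real.sqrt_sq (norm_nonneg _)] at this

set_option maxHeartbeats 2000000 in
lemma exists_U (v v' : E) (hv : v ≠ 0) (hv' : v' ≠ 0) :
    ∃ U : E ≃ₗᵢ[ℂ] E, (∃ c0 : ℂ, c0 ≠ 0 ∧ U v = c0 • v') ∧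
      ∀ x : E, ‖U x - x‖ ≤ dP v v' * ‖x‖ := by
  have hvn : (0:ℝ) < ‖v‖ := norm_pos_iff.mpr hv
  have hv'n : (0:ℝ) < ‖v'‖ := norm_pos_iff.mpr hv'
  set u : E := ((‖v‖:ℂ))⁻¹ • v with hu_def
  set u0 : E := ((‖v'‖:ℂ))⁻¹ • v' with hu0_def
  have hu : ‖u‖ = 1 := by
    rw [hu_def, norm_smul, norm_inv, Complex.norm_real, Real.norm_eq_abs,
      abs_of_pos hvn, inv_mul_cancel₀ hvn.ne']
  have hu0 : ‖u0‖ = 1 := by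
    rw [hu0_def, norm_smul, norm_inv, Complex.norm_real, Real.norm_eq_abs,
      abs_of_pos hv'n, inv_mul_cancel₀ hv'n.ne']
  set ip : ℂ := ⟪u, u0⟫ with hip_def
  set c : ℝ := ‖ip‖ with hc_def
  have hc0 : 0 ≤ c := norm_nonneg _
  have hc1 : c ≤ 1 := by
    rw [hc_def, hip_def]
    simpa [hu, hu0] using norm_inner_le_norm (𝕜 := ℂ) u u0
  have hvu : v = ((‖v‖:ℂ)) • u := by
    rw [hu_def, smul_smul, mul_inv_cancel₀ (by exact_mod_cast hvn.ne'), one_smul]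
  have hdP : dP v v' = Real.arccos c := by
    have hiuv : ip = ((‖v‖⁻¹ * ‖v'‖⁻¹ : ℝ) : ℂ) * ⟪v, v'⟫ := by
      rw [hip_def, hu_def, hu0_def, inner_smul_left, inner_smul_right]
      push_cast
      rw [map_inv₀, Complex.conj_ofReal]
      ring
    have : c = ‖(⟪v, v'⟫ : ℂ)‖ / (‖v‖ * ‖v'‖) := by
      rw [hc_def, hiuv, norm_mul, Complex.norm_real, Real.norm_eq_abs,
        abs_of_pos (by positivity)]
      field_simp
    rw [dP, ← this]
  set α : ℂ := if ip = 0 then 1 else (c : ℂ) / ip with hα_def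
  have hα0 : α ≠ 0 := by
    rw [hα_def]; split_ifs with h
    · exact one_ne_zero
    · exact div_ne_zero (by simpa [hc_def, Complex.ofReal_eq_zero, norm_eq_zero] using h) h
  have hαip : α * ip = (c : ℂ) := by
    rw [hα_def]; split_ifs with h
    · simp [h, hc_def, Complex.ofReal_eq_zero]
    · field_simp
  have hαnorm : ‖α‖ = 1 := by
    rw [hα_def]; split_ifs with h
    · simp
    · rw [norm_div, Complex.norm_real, Real.norm_eq_abs, abs_of_nonneg hc0, hc_def]
      exact div_self (norm_ne_zero_iff.mpr h)
  set u'' : E := α • u0 with hu''_def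
  have hu''n : ‖u''‖ = 1 := by rw [hu''_def, norm_smul, hαnorm, hu0, mul_one]
  have h2 : ⟪u, u''⟫ = (c : ℂ) := by
    rw [hu''_def, inner_smul_right, ← hip_def, hαip]
  have huu : ⟪u, u⟫ = 1 := by
    rw [inner_self_eq_norm_sq_to_K, hu]
    norm_num
  set w0 : E := u'' - (c : ℂ) • u with hw0_def
  have hw0u : ⟪u, w0⟫ = 0 := by
    rw [hw0_def, inner_sub_right, h2, inner_smul_right, huu]; ring
  set s : ℝ := ‖w0‖ with hs_def
  have hs_nonneg : 0 ≤ s := norm_nonneg _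
  have hs2 : s ^ 2 = 1 - c ^ 2 := by
    have e := @norm_sub_sq ℂ _ _ _ _ u'' ((c : ℂ) • u)
    have h3 : ⟪u'', (c : ℂ) • u⟫ = ((c ^ 2 : ℝ) : ℂ) := by
      rw [inner_smul_right, ← inner_conj_symm, h2, Complex.conj_ofReal]
      push_cast; ring
    rw [h3] at e
    rw [hs_def, hw0_def, e, hu''n, norm_smul, hu, Complex.norm_real, Real.norm_eq_abs,
      abs_of_nonneg hc0]
    simp
    rw [← Complex.ofReal_pow, Complex.ofReal_re]
    ring
  by_cases hs0 : s = 0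
  · -- degenerate case: u'' = u
    have hw00 : w0 = 0 := by
      have h9 : ‖w0‖ = 0 := by rw [← hs_def]; exact hs0
      exact norm_eq_zero.mp h9
    have hcc : c = 1 := by
      have h4 : (0:ℝ) = 1 - c ^ 2 := by
        rw [← hs2, hs0]; ring
      nlinarith
    have hu''u : u'' = u := by
      have h5 : u'' - (c:ℂ) • u = 0 := by rw [← hw0_def]; exact hw00
      have h6 : u'' = (c:ℂ) • u := sub_eq_zero.mp h5
      rw [h6, hcc]; simp
    refine ⟨LinearIsometryEquiv.refl ℂ (EuclideanSpace ℂ (Fin n)),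
      ⟨⟨(‖v‖ : ℂ) * α * ((‖v'‖:ℂ))⁻¹, ?_, ?_⟩, ?_⟩⟩
    · apply mul_ne_zero (mul_ne_zero _ hα0)
      · exact inv_ne_zero (by exact_mod_cast hv'n.ne')
      · exact_mod_cast hvn.ne'
    · show v = _
      calc v = (‖v‖:ℂ) • u := hvu
        _ = (‖v‖:ℂ) • u'' := by rw [hu''u]
        _ = (‖v‖:ℂ) • (α • (((‖v'‖:ℂ))⁻¹ • v')) := by rw [hu''_def, hu0_def]
        _ = ((‖v‖:ℂ) * α * ((‖v'‖:ℂ))⁻¹) • v' := by rw [smul_smul, smul_smul, mul_assoc]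
    · intro x
      show ‖x - x‖ ≤ _
      rw [sub_self, norm_zero, hdP]
      exact mul_nonneg (Real.arccos_nonneg _) (norm_nonneg _)
  · -- main case
    have hspos : 0 < s := lt_of_le_of_ne hs_nonneg (Ne.symm hs0)
    set w : EuclideanSpace ℂ (Fin n) := ((s:ℂ))⁻¹ • w0 with hw_def
    have hsC : ((s:ℂ)) ≠ 0 := by exact_mod_cast hs0
    have hw : ‖w‖ = 1 := by
      rw [hw_def, norm_smul, norm_inv, Complex.norm_real, Real.norm_eq_abs,
        abs_of_pos hspos, ← hs_def, inv_mul_cancel₀ hs0]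
    have huw : ⟪u, w⟫ = 0 := by
      rw [hw_def, inner_smul_right, hw0u, mul_zero]
    have hcsu : (c:ℂ) • u + (s:ℂ) • w = u'' := by
      rw [hw_def, smul_inv_smul₀ hsC, hw0_def]
      module
    have hcs1 : c ^ 2 + s ^ 2 = 1 := by rw [hs2]; ring
    obtain ⟨U, hUu, hUbound⟩ := rotation_isometry u w hu hw huw c s hcs1
    refine ⟨U, ⟨⟨(‖v‖ : ℂ) * α * ((‖v'‖:ℂ))⁻¹, ?_, ?_⟩, ?_⟩⟩
    · apply mul_ne_zero (mul_ne_zero _ hα0)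
      · exact inv_ne_zero (by exact_mod_cast hv'n.ne')
      · exact_mod_cast hvn.ne'
    · have h10 : U v = (‖v‖:ℂ) • u'' := by
        conv_lhs => rw [hvu]
        rw [_root_.map_smul, hUu, hcsu]
      rw [h10, hu''_def, hu0_def, smul_smul, smul_smul, mul_assoc]
    · intro x
      rw [hdP]
      calc ‖U x - x‖ ≤ Real.sqrt (2 - 2*c) * ‖x‖ := hUbound x
        _ ≤ Real.arccos c * ‖x‖ :=
            mul_le_mul_of_nonneg_right (chord_le_arccos (by linarith) hc1) (norm_nonneg _)

lemma mem_Tv_iff {v x : E} : x ∈ Tv v ↔ ⟪v, x⟫ = 0 :=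
  Submodule.mem_orthogonal_singleton_iff_inner_right

lemma U_maps_Tv (U : (EuclideanSpace ℂ (Fin n)) ≃ₗᵢ[ℂ] (EuclideanSpace ℂ (Fin n)))
    (v v' : E) (c0 : ℂ) (hc0 : c0 ≠ 0) (hUv : U v = c0 • v') :
    ∀ x ∈ Tv v, U x ∈ Tv v' := by
  intro x hx
  rw [mem_Tv_iff] at hx ⊢
  have h1 : ⟪U v, U x⟫ = 0 := by rw [LinearIsometryEquiv.inner_map_map]; exact hx
  rw [hUv, inner_smul_left] at h1
  have h2 : (starRingEnd ℂ) c0 ≠ 0 := by simpa using hc0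
  exact (mul_eq_zero.mp h1).resolve_left h2

lemma proj_comm (U : (EuclideanSpace ℂ (Fin n)) ≃ₗᵢ[ℂ] (EuclideanSpace ℂ (Fin n)))
    (v v' : E) (c0 : ℂ) (hc0 : c0 ≠ 0) (hUv : U v = c0 • v') (z : E) :
    ((Tv v').orthogonalProjectionOnto (U z) : E) = U ((Tv v).orthogonalProjectionOnto z) := by
  rw [← Submodule.starProjection_apply]
  apply Submodule.eq_starProjection_of_mem_of_inner_eq_zero
  · exact U_maps_Tv U v v' c0 hc0 hUv _ ((Tv v).orthogonalProjectionOnto z).2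
  · intro w hw
    have h1 : z - (Tv v).orthogonalProjectionOnto z ∈ (Tv v)ᗮ :=
      Submodule.sub_starProjection_mem_orthogonal z
    have h1' : (Tv v)ᗮ = ℂ ∙ v := by rw [Tv, Submodule.orthogonal_orthogonal]
    rw [h1'] at h1
    obtain ⟨t, ht⟩ := Submodule.mem_span_singleton.mp h1
    have h2 : U z - U ((Tv v).orthogonalProjectionOnto z) = U (z - (Tv v).orthogonalProjectionOnto z) := by
      rw [map_sub]
    rw [h2, ← ht, _root_.map_smul, hUv, smul_smul, inner_smul_left]
    have h3 : ⟪v', w⟫ = 0 := by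
      rw [Tv, Submodule.mem_orthogonal] at hw
      exact hw v' (Submodule.mem_span_singleton_self v')
    rw [h3, mul_zero]

lemma exists_e (U : (EuclideanSpace ℂ (Fin n)) ≃ₗᵢ[ℂ] (EuclideanSpace ℂ (Fin n)))
    (v v' : E) (hv : v ≠ 0) (hv' : v' ≠ 0) (c0 : ℂ) (hc0 : c0 ≠ 0) (hUv : U v = c0 • v') :
    ∃ e : (Tv v) ≃ₗᵢ[ℂ] (Tv v'), ∀ x : Tv v, (e x : E) = U x := by
  have hmaps := U_maps_Tv U v v' c0 hc0 hUv
  set f : (Tv v) →ₗ[ℂ] (Tv v') := (U.toLinearEquiv.toLinearMap).restrict hmaps with hf_def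
  have hfapp : ∀ x : Tv v, (f x : E) = U x := fun x => rfl
  have hnorm : ∀ x : Tv v, ‖f x‖ = ‖x‖ := by
    intro x
    calc ‖f x‖ = ‖(f x : E)‖ := rfl
      _ = ‖U (x : E)‖ := by rw [hfapp]
      _ = ‖(x : E)‖ := U.norm_map _
      _ = ‖x‖ := rfl
  set Li : (Tv v) →ₗᵢ[ℂ] (Tv v') := ⟨f, hnorm⟩ with hLi_def
  have hfr : Module.finrank ℂ (Tv v) = Module.finrank ℂ (Tv v') := by
    have h1 := Submodule.finrank_add_finrank_orthogonal
      (K := ((ℂ ∙ v) : Submodule ℂ (EuclideanSpace ℂ (Fin n))))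
    have h2 := Submodule.finrank_add_finrank_orthogonal
      (K := ((ℂ ∙ v') : Submodule ℂ (EuclideanSpace ℂ (Fin n))))
    rw [finrank_span_singleton hv] at h1
    rw [finrank_span_singleton hv'] at h2
    have h3 : Module.finrank ℂ (Tv v) = Module.finrank ℂ ((ℂ ∙ v)ᗮ) := rfl
    have h4 : Module.finrank ℂ (Tv v') = Module.finrank ℂ ((ℂ ∙ v')ᗮ) := rfl
    omega
  have hsurj : Function.Surjective Li :=
    (LinearMap.injective_iff_surjective_of_finrank_eq_finrank hfr).mp Li.injective
  exact ⟨LinearIsometryEquiv.ofSurjective Li hsurj, fun x => rfl⟩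

end Aux

section Ops

variable {X Y : Type*} [NormedAddCommGroup X] [NormedSpace ℂ X] [FiniteDimensional ℂ X]
  [NormedAddCommGroup Y] [NormedSpace ℂ Y] [FiniteDimensional ℂ Y]

set_option linter.unusedSectionVars false

/-- The CLE associated to a bijective CLM in finite dimensions. -/
def cleOf (B : X →L[ℂ] X) (hbij : Function.Bijective B) : X ≃L[ℂ] X :=
  (LinearEquiv.ofBijective (B : X →ₗ[ℂ] X) hbij).toContinuousLinearEquiv

lemma cleOf_coe (B : X →L[ℂ] X) (hbij : Function.Bijective B) :
    ((cleOf B hbij : X ≃L[ℂ] X) : X →L[ℂ] X) = B := by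
  ext x; rfl

lemma cleOf_apply (B : X →L[ℂ] X) (hbij : Function.Bijective B) (x : X) :
    (cleOf B hbij) x = B x := rfl

lemma inverse_eq_cleOf (B : X →L[ℂ] X) (hbij : Function.Bijective B) :
    B.inverse = ((cleOf B hbij).symm : X →L[ℂ] X) := by
  have h := ContinuousLinearMap.inverse_equiv (cleOf B hbij)
  rwa [cleOf_coe] at h

lemma apply_cleOf_symm (B : X →L[ℂ] X) (hbij : Function.Bijective B) (y : X) :
    B ((cleOf B hbij).symm y) = y := by
  rw [← cleOf_apply B hbij]
  exact (cleOf B hbij).apply_symm_apply y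

lemma inverse_apply_apply (B : X →L[ℂ] X) (hbij : Function.Bijective B) (x : X) :
    B.inverse (B x) = x := by
  rw [inverse_eq_cleOf B hbij]
  have h : B x = (cleOf B hbij) x := (cleOf_apply B hbij x).symm
  rw [h]
  exact (cleOf B hbij).symm_apply_apply x

lemma norm_le_inverse_norm_mul (B : X →L[ℂ] X) (hbij : Function.Bijective B) (x : X) :
    ‖x‖ ≤ ‖B.inverse‖ * ‖B x‖ := by
  conv_lhs => rw [← inverse_apply_apply B hbij x]
  exact B.inverse.le_opNorm (B x)

lemma bijective_of_lower_bound (B : X →L[ℂ] X) (m : ℝ) (hm : 0 < m)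
    (h : ∀ x, m * ‖x‖ ≤ ‖B x‖) :
    Function.Bijective B := by
  have hinj : Function.Injective B := by
    intro x y hxy
    have h1 : B (x - y) = 0 := by rw [map_sub, hxy, sub_self]
    have h2 := h (x - y)
    rw [h1, norm_zero] at h2
    have h3 : ‖x - y‖ ≤ 0 := by
      by_contra h4
      push_neg at h4
      nlinarith
    rw [← sub_eq_zero]
    exact norm_le_zero_iff.mp h3
  have hsurj : Function.Surjective B := by
    have : Function.Injective (B : X →ₗ[ℂ] X) := hinj
    exact LinearMap.injective_iff_surjective.mp this
  exact ⟨hinj, hsurj⟩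

lemma inverse_norm_le_of_lower_bound (B : X →L[ℂ] X) (m : ℝ) (hm : 0 < m)
    (h : ∀ x, m * ‖x‖ ≤ ‖B x‖) :
    ‖B.inverse‖ ≤ m⁻¹ := by
  have hbij := bijective_of_lower_bound B m hm h
  apply ContinuousLinearMap.opNorm_le_bound _ (by positivity)
  intro y
  have h1 : B (B.inverse y) = y := by
    rw [inverse_eq_cleOf B hbij]
    exact apply_cleOf_symm B hbij y
  have h2 := h (B.inverse y)
  rw [h1] at h2
  rw [inv_mul_eq_div, le_div_iff₀ hm, mul_comm]
  exact h2

lemma inverse_resolvent_bound (B B' : X →L[ℂ] X)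
    (hbij : Function.Bijective B) (hbij' : Function.Bijective B') :
    ‖B.inverse‖ ≤ ‖B'.inverse‖ + ‖B.inverse‖ * ‖B' - B‖ * ‖B'.inverse‖ := by
  apply ContinuousLinearMap.opNorm_le_bound
  · have h1 : (0:ℝ) ≤ ‖B'.inverse‖ := norm_nonneg _
    have h2 : (0:ℝ) ≤ ‖B.inverse‖ * ‖B' - B‖ * ‖B'.inverse‖ := by positivity
    linarith
  intro y
  have key : B.inverse y = B'.inverse y + B.inverse ((B' - B) (B'.inverse y)) := by
    have h3 : (B' - B) (B'.inverse y) = y - B (B'.inverse y) := by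
      rw [ContinuousLinearMap.sub_apply]
      congr 1
      rw [inverse_eq_cleOf B' hbij']
      exact apply_cleOf_symm B' hbij' y
    rw [h3, map_sub, inverse_apply_apply B hbij]
    abel
  rw [key]
  calc ‖B'.inverse y + B.inverse ((B' - B) (B'.inverse y))‖
      ≤ ‖B'.inverse y‖ + ‖B.inverse ((B' - B) (B'.inverse y))‖ := norm_add_le _ _
    _ ≤ ‖B'.inverse‖ * ‖y‖ + ‖B.inverse‖ * (‖B' - B‖ * (‖B'.inverse‖ * ‖y‖)) := by
        gcongr
        · exact (B'.inverse).le_opNorm y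
        · calc ‖B.inverse ((B' - B) (B'.inverse y))‖
              ≤ ‖B.inverse‖ * ‖(B' - B) (B'.inverse y)‖ := (B.inverse).le_opNorm _
            _ ≤ ‖B.inverse‖ * (‖B' - B‖ * ‖B'.inverse y‖) := by
                gcongr
                exact (B' - B).le_opNorm _
            _ ≤ ‖B.inverse‖ * (‖B' - B‖ * (‖B'.inverse‖ * ‖y‖)) := by
                gcongr
                exact (B'.inverse).le_opNorm y
    _ = (‖B'.inverse‖ + ‖B.inverse‖ * ‖B' - B‖ * ‖B'.inverse‖) * ‖y‖ := by ring

lemma apply_inverse_apply (B : X →L[ℂ] X) (hbij : Function.Bijective B) (y : X) :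
    B (B.inverse y) = y := by
  rw [inverse_eq_cleOf B hbij]
  exact apply_cleOf_symm B hbij y

def conjCLM (e : X ≃ₗᵢ[ℂ] Y) (B : Y →L[ℂ] Y) : X →L[ℂ] X :=
  (((e.symm.toContinuousLinearEquiv : Y →L[ℂ] X).comp B).comp
    (e.toContinuousLinearEquiv : X →L[ℂ] Y))

lemma conjCLM_apply (e : X ≃ₗᵢ[ℂ] Y) (B : Y →L[ℂ] Y) (x : X) :
    conjCLM e B x = e.symm (B (e x)) := rfl

lemma bijective_of_conjCLM (e : X ≃ₗᵢ[ℂ] Y) (B : Y →L[ℂ] Y)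
    (h : Function.Bijective (conjCLM e B)) : Function.Bijective B := by
  have hfun : ⇑B = ⇑e ∘ ⇑(conjCLM e B) ∘ ⇑e.symm := by
    funext y
    simp [conjCLM_apply, e.apply_symm_apply]
  rw [hfun]
  exact (e.bijective.comp h).comp e.symm.bijective

lemma conjCLM_bijective (e : X ≃ₗᵢ[ℂ] Y) (B : Y →L[ℂ] Y)
    (h : Function.Bijective B) : Function.Bijective (conjCLM e B) := by
  have hfun : ⇑(conjCLM e B) = ⇑e.symm ∘ ⇑B ∘ ⇑e := by
    funext x; rfl
  rw [hfun]
  exact (e.symm.bijective.comp h).comp e.bijective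

lemma conjCLM_inverse_norm (e : X ≃ₗᵢ[ℂ] Y) (B : Y →L[ℂ] Y)
    (hB : Function.Bijective B) :
    ‖(conjCLM e B).inverse‖ = ‖B.inverse‖ := by
  have hC : Function.Bijective (conjCLM e B) := conjCLM_bijective e B hB
  have hform : ∀ x : X, (conjCLM e B).inverse x = e.symm (B.inverse (e x)) := by
    intro x
    apply hC.injective
    rw [apply_inverse_apply _ hC]
    rw [conjCLM_apply, e.apply_symm_apply, apply_inverse_apply _ hB]
    exact (e.symm_apply_apply x).symm
  apply le_antisymm
  · apply ContinuousLinearMap.opNorm_le_bound _ (norm_nonneg _)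
    intro x
    rw [hform x]
    calc ‖e.symm (B.inverse (e x))‖ = ‖B.inverse (e x)‖ := e.symm.norm_map _
      _ ≤ ‖B.inverse‖ * ‖e x‖ := (B.inverse).le_opNorm _
      _ = ‖B.inverse‖ * ‖x‖ := by rw [e.norm_map]
  · apply ContinuousLinearMap.opNorm_le_bound _ (norm_nonneg _)
    intro y
    have h1 : (conjCLM e B).inverse (e.symm y) = e.symm (B.inverse y) := by
      rw [hform, e.apply_symm_apply]
    calc ‖B.inverse y‖ = ‖e.symm (B.inverse y)‖ := (e.symm.norm_map _).symm
      _ = ‖(conjCLM e B).inverse (e.symm y)‖ := by rw [h1]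
      _ ≤ ‖(conjCLM e B).inverse‖ * ‖e.symm y‖ := ((conjCLM e B).inverse).le_opNorm _
      _ = ‖(conjCLM e B).inverse‖ * ‖y‖ := by rw [e.symm.norm_map]

end Ops

set_option maxHeartbeats 4000000 in
set_option synthInstance.maxHeartbeats 400000 in
/-- Theorem (Lipschitz property of `μ` w.r.t. the distance `dist` on triples). -/
theorem mu_lipschitz {n : ℕ} (A A' : Matrix (Fin n) (Fin n) ℂ)
    (hA : frobNorm A = 1) (hA' : frobNorm A' = 1)
    (v v' : EuclideanSpace ℂ (Fin n)) (hv : v ≠ 0) (hv' : v' ≠ 0)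
    (lam lam' : ℂ) (heig : Matrix.toEuclideanLin A v = lam • v)
    (hinv : Function.Bijective (Alv A lam v))
    (ε : ℝ) (hε0 : 0 < ε) (hε1 : ε < 0.37)
    (hcond : mu A lam v * distT A lam v A' lam' v' ≤ ε / 12.5) :
    Function.Bijective (Alv A' lam' v') ∧
      mu A lam v / (1 + ε) ≤ mu A' lam' v' ∧
      mu A' lam' v' ≤ (1 + ε) * mu A lam v := by
  classical
  have hεp : (0:ℝ) < 1 + ε := by linarith
  by_cases htriv : Tv v = ⊥
  · -- degenerate case: `Tv v` is trivial, so is `Tv v'`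
    have h1 : (ℂ ∙ v) = ⊤ := Submodule.orthogonal_eq_bot_iff.mp htriv
    have hn : Module.finrank ℂ (EuclideanSpace ℂ (Fin n)) = 1 := by
      have h2 := finrank_span_singleton (K := ℂ) hv
      rw [h1, finrank_top] at h2
      exact h2
    have h2 : (ℂ ∙ v') = ⊤ := by
      apply Submodule.eq_top_of_finrank_eq
      rw [finrank_span_singleton hv', hn]
    have htriv' : Tv v' = ⊥ := by rw [Tv, h2, Submodule.top_orthogonal_eq_bot]
    have hz' : ∀ y : Tv v', y = 0 := fun y =>
      Subtype.ext ((Submodule.eq_bot_iff _).mp htriv' _ y.2)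
    have hbij' : Function.Bijective (Alv A' lam' v') := by
      constructor
      · intro p q _
        rw [hz' p, hz' q]
      · intro y
        exact ⟨0, by rw [hz' y, map_zero]⟩
    have hmu0 : ∀ (B : Matrix (Fin n) (Fin n) ℂ) (l : ℂ) (w : EuclideanSpace ℂ (Fin n)),
        Tv w = ⊥ → ‖(AlvC B l w).inverse‖ = 0 := by
      intro B l w hw
      have hzz : ∀ y : Tv w, y = 0 := fun y =>
        Subtype.ext ((Submodule.eq_bot_iff _).mp hw _ y.2)
      have hz0 : (AlvC B l w).inverse = 0 := by
        ext y
        rw [hzz y, map_zero, map_zero]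
      rw [hz0]
      exact ContinuousLinearMap.opNorm_zero
    refine ⟨hbij', ?_, ?_⟩
    · rw [mu, mu, hmu0 A lam v htriv, hmu0 A' lam' v' htriv']
      simp
    · rw [mu, mu, hmu0 A lam v htriv, hmu0 A' lam' v' htriv']
      simp
  · -- main case
    have hinvC : Function.Bijective (AlvC A lam v) := hinv
    obtain ⟨K, hK⟩ : ∃ K, ‖(AlvC A lam v).inverse‖ = K := ⟨_, rfl⟩
    have hmuK : mu A lam v = K := by rw [mu, hA, hK, one_mul]
    -- positivity of K
    obtain ⟨x0, hx0mem, hx0⟩ := (Submodule.ne_bot_iff _).mp htriv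
    have hK0 : 0 < K := by
      set x0' : Tv v := ⟨x0, hx0mem⟩ with hx0'
      have hx0n : (0:ℝ) < ‖x0'‖ := by
        apply norm_pos_iff.mpr
        intro h
        exact hx0 (congrArg Subtype.val h)
      have h3 := norm_le_inverse_norm_mul (AlvC A lam v) hinvC x0'
      rw [hK] at h3
      by_contra h4
      push_neg at h4
      have h5 : K = 0 := le_antisymm h4 (hK ▸ ContinuousLinearMap.opNorm_nonneg _)
      rw [h5, zero_mul] at h3
      linarith
    -- eigenvalue bound
    have hvn : (0:ℝ) < ‖v‖ := norm_pos_iff.mpr hv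
    have hlam : ‖lam‖ ≤ 1 := by
      have h5 := toEuclideanLin_norm_le A v
      rw [heig, norm_smul, hA, one_mul] at h5
      nlinarith [norm_nonneg lam]
    have hop2 : ∀ x : EuclideanSpace ℂ (Fin n),
        ‖Matrix.toEuclideanLin A x - lam • x‖ ≤ 2 * ‖x‖ := by
      intro x
      have h6 : ‖Matrix.toEuclideanLin A x‖ ≤ 1 * ‖x‖ := by
        have := toEuclideanLin_norm_le A x
        rwa [hA] at this
      have h7 : ‖lam • x‖ ≤ 1 * ‖x‖ := by
        rw [norm_smul]
        exact mul_le_mul_of_nonneg_right hlam (norm_nonneg x)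
      calc ‖Matrix.toEuclideanLin A x - lam • x‖
          ≤ ‖Matrix.toEuclideanLin A x‖ + ‖lam • x‖ := norm_sub_le _ _
        _ ≤ 1 * ‖x‖ + 1 * ‖x‖ := add_le_add h6 h7
        _ = 2 * ‖x‖ := by ring
    -- distance components
    obtain ⟨a, ha⟩ : ∃ a, frobNorm (A - A') = a := ⟨_, rfl⟩
    obtain ⟨b, hb⟩ : ∃ b, ‖lam - lam'‖ = b := ⟨_, rfl⟩
    obtain ⟨θ, hθ⟩ : ∃ θ, dP v v' = θ := ⟨_, rfl⟩
    have ha0 : 0 ≤ a := ha ▸ frobNorm_nonneg _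
    have hb0 : 0 ≤ b := hb ▸ norm_nonneg _
    have hθ0 : 0 ≤ θ := hθ ▸ Real.arccos_nonneg _
    have hδ : distT A lam v A' lam' v' = Real.sqrt (a ^ 2 + b ^ 2 + θ ^ 2) := by
      rw [distT, hA, hA', inv_one, one_smul, one_smul, Complex.ofReal_one, div_one, div_one,
        ha, hb, hθ]
    have hδ0 : 0 ≤ distT A lam v A' lam' v' := by rw [hδ]; positivity
    have hKd : K * distT A lam v A' lam' v' ≤ ε / 12.5 := by
      rw [← hmuK]; exact hcond
    -- unitary and conjugation
    obtain ⟨U, ⟨c0, hc0, hUv⟩, hUb⟩ := exists_U v v' hv hv'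
    have hUb' : ∀ z : EuclideanSpace ℂ (Fin n), ‖U z - z‖ ≤ θ * ‖z‖ := by
      intro z
      have := hUb z
      rwa [hθ] at this
    obtain ⟨e, he⟩ := exists_e U v v' hv hv' c0 hc0 hUv
    obtain ⟨B'', hB''⟩ : ∃ B'', conjCLM e (AlvC A' lam' v') = B'' := ⟨_, rfl⟩
    -- difference bound
    have hproj : ∀ z : EuclideanSpace ℂ (Fin n),
        ‖((Tv v').orthogonalProjectionOnto z : EuclideanSpace ℂ (Fin n))‖ ≤ ‖z‖ := by
      intro z
      have h1 : (inner ℂ (((Tv v').orthogonalProjectionOnto z : EuclideanSpace ℂ (Fin n)))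
          (z - ((Tv v').orthogonalProjectionOnto z : EuclideanSpace ℂ (Fin n))) : ℂ) = 0 := by
        rw [inner_eq_zero_symm]
        exact Submodule.starProjection_inner_eq_zero z _ ((Tv v').orthogonalProjectionOnto z).2
      have h2 := @norm_add_sq ℂ _ _ _ _
        (((Tv v').orthogonalProjectionOnto z : EuclideanSpace ℂ (Fin n)))
        (z - ((Tv v').orthogonalProjectionOnto z : EuclideanSpace ℂ (Fin n)))
      rw [h1] at h2
      simp only [map_zero, mul_zero, add_zero] at h2
      have h3 : ((Tv v').orthogonalProjectionOnto z : EuclideanSpace ℂ (Fin n))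
          + (z - ((Tv v').orthogonalProjectionOnto z : EuclideanSpace ℂ (Fin n))) = z := by abel
      rw [h3] at h2
      nlinarith [norm_nonneg (z - ((Tv v').orthogonalProjectionOnto z : EuclideanSpace ℂ (Fin n))),
        norm_nonneg z,
        norm_nonneg (((Tv v').orthogonalProjectionOnto z : EuclideanSpace ℂ (Fin n)))]
    have hdiff : ∀ x : Tv v, ‖(B'' - AlvC A lam v) x‖
        ≤ (a + b + 4 * θ) * ‖(x : EuclideanSpace ℂ (Fin n))‖ := by
      intro x
      have s1 : ‖(B'' - AlvC A lam v) x‖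
          = ‖((AlvC A' lam' v') (e x) : EuclideanSpace ℂ (Fin n))
              - U ((AlvC A lam v x : Tv v) : EuclideanSpace ℂ (Fin n))‖ := by
        rw [ContinuousLinearMap.sub_apply, ← e.norm_map (B'' x - AlvC A lam v x), map_sub]
        have h6 : e (B'' x) = (AlvC A' lam' v') (e x) := by
          rw [← hB'', conjCLM_apply, e.apply_symm_apply]
        rw [h6]
        have h7 : ‖(AlvC A' lam' v') (e x) - e (AlvC A lam v x)‖
            = ‖((AlvC A' lam' v') (e x) : EuclideanSpace ℂ (Fin n))
                - (e (AlvC A lam v x) : EuclideanSpace ℂ (Fin n))‖ := rfl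
        rw [h7, he (AlvC A lam v x)]
      have c2 : ((AlvC A' lam' v') (e x) : EuclideanSpace ℂ (Fin n))
          = ((Tv v').orthogonalProjectionOnto
              (Matrix.toEuclideanLin A' (U (x : EuclideanSpace ℂ (Fin n)))
                - lam' • (U (x : EuclideanSpace ℂ (Fin n)))) : EuclideanSpace ℂ (Fin n)) := by
        have h8 : ((AlvC A' lam' v') (e x) : EuclideanSpace ℂ (Fin n))
            = ((Tv v').orthogonalProjectionOnto
                (Matrix.toEuclideanLin A' ((e x : EuclideanSpace ℂ (Fin n)))
                  - lam' • ((e x : EuclideanSpace ℂ (Fin n)))) : EuclideanSpace ℂ (Fin n)) := rfl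
        rw [h8, he x]
      have c1 : U ((AlvC A lam v x : Tv v) : EuclideanSpace ℂ (Fin n))
          = ((Tv v').orthogonalProjectionOnto
              (U (Matrix.toEuclideanLin A (x : EuclideanSpace ℂ (Fin n))
                - lam • (x : EuclideanSpace ℂ (Fin n)))) : EuclideanSpace ℂ (Fin n)) := by
        have h8 : ((AlvC A lam v x : Tv v) : EuclideanSpace ℂ (Fin n))
            = ((Tv v).orthogonalProjectionOnto
                (Matrix.toEuclideanLin A (x : EuclideanSpace ℂ (Fin n))
                  - lam • (x : EuclideanSpace ℂ (Fin n))) : EuclideanSpace ℂ (Fin n)) := rfl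
        rw [h8, ← proj_comm U v v' c0 hc0 hUv]
      rw [s1, c2, c1]
      have c3 : ((Tv v').orthogonalProjectionOnto
            (Matrix.toEuclideanLin A' (U (x : EuclideanSpace ℂ (Fin n)))
              - lam' • (U (x : EuclideanSpace ℂ (Fin n)))) : EuclideanSpace ℂ (Fin n))
          - ((Tv v').orthogonalProjectionOnto
              (U (Matrix.toEuclideanLin A (x : EuclideanSpace ℂ (Fin n))
                - lam • (x : EuclideanSpace ℂ (Fin n)))) : EuclideanSpace ℂ (Fin n))
          = ((Tv v').orthogonalProjectionOnto
              ((Matrix.toEuclideanLin A' (U (x : EuclideanSpace ℂ (Fin n)))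
                - lam' • (U (x : EuclideanSpace ℂ (Fin n))))
                - (U (Matrix.toEuclideanLin A (x : EuclideanSpace ℂ (Fin n))
                  - lam • (x : EuclideanSpace ℂ (Fin n))))) : EuclideanSpace ℂ (Fin n)) := by
        have hms : (Tv v').orthogonalProjectionOnto
              (Matrix.toEuclideanLin A' (U (x : EuclideanSpace ℂ (Fin n)))
                - lam' • (U (x : EuclideanSpace ℂ (Fin n))))
            - (Tv v').orthogonalProjectionOnto
              (U (Matrix.toEuclideanLin A (x : EuclideanSpace ℂ (Fin n))
                - lam • (x : EuclideanSpace ℂ (Fin n))))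
            = (Tv v').orthogonalProjectionOnto
              ((Matrix.toEuclideanLin A' (U (x : EuclideanSpace ℂ (Fin n)))
                - lam' • (U (x : EuclideanSpace ℂ (Fin n))))
                - (U (Matrix.toEuclideanLin A (x : EuclideanSpace ℂ (Fin n))
                  - lam • (x : EuclideanSpace ℂ (Fin n))))) := (map_sub _ _ _).symm
        rw [← hms]
        rfl
      rw [c3]
      refine le_trans (hproj _) ?_
      have hd : (Matrix.toEuclideanLin A' (U (x : EuclideanSpace ℂ (Fin n)))
            - lam' • (U (x : EuclideanSpace ℂ (Fin n))))
            - (U (Matrix.toEuclideanLin A (x : EuclideanSpace ℂ (Fin n))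
              - lam • (x : EuclideanSpace ℂ (Fin n))))
          = (Matrix.toEuclideanLin (A' - A)) (U (x : EuclideanSpace ℂ (Fin n)))
            + (-((lam' - lam) • (U (x : EuclideanSpace ℂ (Fin n)))))
            + ((Matrix.toEuclideanLin A) (U (x : EuclideanSpace ℂ (Fin n))
                - (x : EuclideanSpace ℂ (Fin n)))
              - lam • (U (x : EuclideanSpace ℂ (Fin n)) - (x : EuclideanSpace ℂ (Fin n))))
            + (-(U (Matrix.toEuclideanLin A (x : EuclideanSpace ℂ (Fin n))
                - lam • (x : EuclideanSpace ℂ (Fin n)))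
              - (Matrix.toEuclideanLin A (x : EuclideanSpace ℂ (Fin n))
                - lam • (x : EuclideanSpace ℂ (Fin n))))) := by
        have e1 : Matrix.toEuclideanLin (A' - A)
            = Matrix.toEuclideanLin A' - Matrix.toEuclideanLin A := map_sub _ _ _
        rw [e1]
        simp only [LinearMap.sub_apply, map_sub]
        module
      rw [hd]
      obtain ⟨xe, hxe⟩ : ∃ xe, (x : EuclideanSpace ℂ (Fin n)) = xe := ⟨_, rfl⟩
      rw [hxe]
      have n1 : ‖(Matrix.toEuclideanLin (A' - A)) (U xe)‖ ≤ a * ‖xe‖ := by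
        have h10 := toEuclideanLin_norm_le (A' - A) (U xe)
        rwa [frobNorm_sub_rev, ha, U.norm_map] at h10
      have n2 : ‖-((lam' - lam) • (U xe))‖ ≤ b * ‖xe‖ := by
        rw [norm_neg, norm_smul, U.norm_map, norm_sub_rev, hb]
      have n3 : ‖(Matrix.toEuclideanLin A) (U xe - xe) - lam • (U xe - xe)‖
          ≤ 2 * (θ * ‖xe‖) := by
        refine le_trans (hop2 _) ?_
        exact mul_le_mul_of_nonneg_left (hUb' xe) (by norm_num)
      have n4 : ‖-(U (Matrix.toEuclideanLin A xe - lam • xe)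
          - (Matrix.toEuclideanLin A xe - lam • xe))‖ ≤ θ * (2 * ‖xe‖) := by
        rw [norm_neg]
        refine le_trans (hUb' _) ?_
        exact mul_le_mul_of_nonneg_left (hop2 xe) hθ0
      have tri : ∀ p q r t : EuclideanSpace ℂ (Fin n),
          ‖p + q + r + t‖ ≤ ‖p‖ + ‖q‖ + ‖r‖ + ‖t‖ := by
        intro p q r t
        calc ‖p + q + r + t‖ ≤ ‖p + q + r‖ + ‖t‖ := norm_add_le _ _
          _ ≤ (‖p + q‖ + ‖r‖) + ‖t‖ := by
              have := norm_add_le (p + q) r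
              linarith
          _ ≤ ((‖p‖ + ‖q‖) + ‖r‖) + ‖t‖ := by
              have := norm_add_le p q
              linarith
      refine le_trans (tri _ _ _ _) ?_
      have hgoal : (a + b + 4 * θ) * ‖xe‖
          = a * ‖xe‖ + b * ‖xe‖ + 2 * (θ * ‖xe‖) + θ * (2 * ‖xe‖) := by ring
      rw [hgoal]
      linarith [n1, n2, n3, n4]
    -- operator norm difference
    have hDb : ‖B'' - AlvC A lam v‖ ≤ a + b + 4 * θ :=
      ContinuousLinearMap.opNorm_le_bound _ (by linarith) hdiff
    -- arithmetic
    have h18 : a + b + 4 * θ ≤ Real.sqrt 18 * distT A lam v A' lam' v' := by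
      have hsq : (a + b + 4 * θ) ^ 2 ≤ 18 * (a ^ 2 + b ^ 2 + θ ^ 2) := by
        nlinarith [sq_nonneg (a - b), sq_nonneg (4 * a - θ), sq_nonneg (4 * b - θ)]
      calc a + b + 4 * θ = Real.sqrt ((a + b + 4 * θ) ^ 2) :=
            (Real.sqrt_sq (by linarith)).symm
        _ ≤ Real.sqrt (18 * (a ^ 2 + b ^ 2 + θ ^ 2)) := Real.sqrt_le_sqrt hsq
        _ = Real.sqrt 18 * Real.sqrt (a ^ 2 + b ^ 2 + θ ^ 2) := Real.sqrt_mul (by norm_num) _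
        _ = Real.sqrt 18 * distT A lam v A' lam' v' := by rw [hδ]
    have hs18 : Real.sqrt 18 ≤ 4.25 := by
      rw [show (4.25:ℝ) = Real.sqrt (4.25 ^ 2) from (Real.sqrt_sq (by norm_num)).symm]
      exact Real.sqrt_le_sqrt (by norm_num)
    have hKD : K * (a + b + 4 * θ) ≤ 0.34 * ε := by
      calc K * (a + b + 4 * θ) ≤ K * (Real.sqrt 18 * distT A lam v A' lam' v') :=
            mul_le_mul_of_nonneg_left h18 hK0.le
        _ = Real.sqrt 18 * (K * distT A lam v A' lam' v') := by ring
        _ ≤ 4.25 * (ε / 12.5) :=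
            mul_le_mul hs18 hKd (mul_nonneg hK0.le hδ0) (by norm_num)
        _ = 0.34 * ε := by ring
    have hKDb : K * ‖B'' - AlvC A lam v‖ ≤ 0.34 * ε :=
      le_trans (mul_le_mul_of_nonneg_left hDb hK0.le) hKD
    -- lower bound for B''
    have hlow : ∀ x : Tv v, ((1 + ε) * K)⁻¹ * ‖x‖ ≤ ‖B'' x‖ := by
      intro x
      have l1 : ‖x‖ ≤ K * ‖AlvC A lam v x‖ := by
        have := norm_le_inverse_norm_mul (AlvC A lam v) hinvC x
        rwa [hK] at this
      have l2 : ‖B'' x - AlvC A lam v x‖ ≤ ‖B'' - AlvC A lam v‖ * ‖x‖ := by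
        have := (B'' - AlvC A lam v).le_opNorm x
        rwa [ContinuousLinearMap.sub_apply] at this
      have l3 : ‖AlvC A lam v x‖ - ‖B'' x - AlvC A lam v x‖ ≤ ‖B'' x‖ := by
        have h11 := norm_sub_le (B'' x) (B'' x - AlvC A lam v x)
        have h12 : B'' x - (B'' x - AlvC A lam v x) = AlvC A lam v x := by abel
        rw [h12] at h11
        linarith
      have hKinv : K⁻¹ * ‖x‖ ≤ ‖AlvC A lam v x‖ := by
        rw [inv_mul_le_iff₀ hK0]
        exact l1
      have hm : ((1 + ε) * K)⁻¹ ≤ K⁻¹ - ‖B'' - AlvC A lam v‖ := by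
        have hh1 : (1:ℝ) ≤ (1 - K * ‖B'' - AlvC A lam v‖) * (1 + ε) := by
          nlinarith [norm_nonneg (B'' - AlvC A lam v)]
        have hh3 : (1 + ε)⁻¹ ≤ 1 - K * ‖B'' - AlvC A lam v‖ := by
          rw [inv_eq_one_div, div_le_iff₀ hεp]
          linarith
        calc ((1 + ε) * K)⁻¹ = (1 + ε)⁻¹ * K⁻¹ := by rw [mul_inv]
          _ ≤ (1 - K * ‖B'' - AlvC A lam v‖) * K⁻¹ :=
              mul_le_mul_of_nonneg_right hh3 (by positivity)
          _ = K⁻¹ - ‖B'' - AlvC A lam v‖ * (K * K⁻¹) := by ring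
          _ = K⁻¹ - ‖B'' - AlvC A lam v‖ := by rw [mul_inv_cancel₀ hK0.ne', mul_one]
      calc ((1 + ε) * K)⁻¹ * ‖x‖ ≤ (K⁻¹ - ‖B'' - AlvC A lam v‖) * ‖x‖ :=
            mul_le_mul_of_nonneg_right hm (norm_nonneg x)
        _ = K⁻¹ * ‖x‖ - ‖B'' - AlvC A lam v‖ * ‖x‖ := by ring
        _ ≤ ‖AlvC A lam v x‖ - ‖B'' x - AlvC A lam v x‖ := by linarith
        _ ≤ ‖B'' x‖ := l3
    have hm0 : (0:ℝ) < ((1 + ε) * K)⁻¹ := by positivity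
    have hbij'' : Function.Bijective B'' := bijective_of_lower_bound B'' _ hm0 hlow
    have hinvb : ‖B''.inverse‖ ≤ (1 + ε) * K := by
      have := inverse_norm_le_of_lower_bound B'' _ hm0 hlow
      rwa [inv_inv] at this
    have hbijC' : Function.Bijective (AlvC A' lam' v') := by
      apply bijective_of_conjCLM e
      rw [hB'']
      exact hbij''
    have hmunorm : ‖(AlvC A' lam' v').inverse‖ = ‖B''.inverse‖ := by
      rw [← hB'']
      exact (conjCLM_inverse_norm e _ hbijC').symm
    have hmu' : mu A' lam' v' = ‖B''.inverse‖ := by rw [mu, hA', one_mul, hmunorm]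
    have hres := inverse_resolvent_bound (AlvC A lam v) B'' hinvC hbij''
    rw [hK] at hres
    refine ⟨hbijC', ?_, ?_⟩
    · rw [hmuK, hmu', div_le_iff₀ hεp]
      have h30 : (0:ℝ) ≤ ‖B''.inverse‖ := ContinuousLinearMap.opNorm_nonneg _
      nlinarith [hres, hKDb, h30]
    · rw [hmuK, hmu']
      exact hinvb
end
end

section
/- Let λ be a simple eigenvalue of A ∈ ℂ^{n×n} with nonzero right eigenvector v (Av = λv) and nonzero left eigenvector u (A*u = conj(λ)·u), so that ⟨v,u⟩ ≠ 0. Then the supremum over all Ȧ ∈ ℂ^{n×n} with ‖Ȧ‖_F = 1 of |⟨Ȧ v, u⟩| / |⟨v, u⟩| equals (‖u‖·‖v‖)/|⟨u,v⟩|. -/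
noncomputable section

open Matrix Set

/-- Embedding of matrices into `ℂ^{n×n}` with the `ℓ²` norm. -/
def mEmb {n : ℕ} (A : Matrix (Fin n) (Fin n) ℂ) : EuclideanSpace ℂ (Fin n × Fin n) :=
  (WithLp.equiv 2 _).symm (fun p => A p.1 p.2)

lemma mEmb_apply {n : ℕ} (A : Matrix (Fin n) (Fin n) ℂ) (p : Fin n × Fin n) :
    mEmb A p = A p.1 p.2 := rfl

lemma mEmb_smul {n : ℕ} (c : ℂ) (A : Matrix (Fin n) (Fin n) ℂ) :
    mEmb (c • A) = c • mEmb A := rfl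

lemma frobNorm_eq_norm {n : ℕ} (A : Matrix (Fin n) (Fin n) ℂ) :
    frobNorm A = ‖mEmb A‖ := by
  rw [EuclideanSpace.norm_eq, frobNorm]
  congr 1
  rw [Fintype.sum_prod_type]
  simp [mEmb_apply]

lemma inner_mEmb_eq {n : ℕ} (A : Matrix (Fin n) (Fin n) ℂ) (v u : EuclideanSpace ℂ (Fin n)) :
    (inner ℂ (Matrix.toEuclideanLin A v) u : ℂ) =
      inner ℂ (mEmb A) (mEmb (Matrix.of fun i j => u i * (starRingEnd ℂ) (v j))) := by
  simp only [PiLp.inner_apply, RCLike.inner_apply, Matrix.toEuclideanLin_apply,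
    Fintype.sum_prod_type, mEmb_apply, Matrix.of_apply]
  simp only [WithLp.equiv_symm_apply, PiLp.toLp_apply, Matrix.mulVec, dotProduct, map_sum,
    Finset.sum_mul, Finset.mul_sum]
  congr 1; ext i; congr 1; ext j
  simp only [_root_.map_mul, WithLp.equiv_apply]
  ring

lemma norm_mEmb_outer {n : ℕ} (u v : EuclideanSpace ℂ (Fin n)) :
    ‖mEmb (Matrix.of fun i j => u i * (starRingEnd ℂ) (v j))‖ = ‖u‖ * ‖v‖ := by
  rw [EuclideanSpace.norm_eq, EuclideanSpace.norm_eq, EuclideanSpace.norm_eq,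
    ← Real.sqrt_mul (by positivity)]
  congr 1
  rw [Fintype.sum_prod_type, Finset.sum_mul_sum]
  simp [mEmb_apply, mul_pow]

/-- Proposition: the eigenvalue condition number equals `‖u‖‖v‖/|⟨u,v⟩|`. -/
theorem eigenvalue_condition_eq {n : ℕ} (A : Matrix (Fin n) (Fin n) ℂ) (lam : ℂ)
    (hsimple : (Matrix.charpoly A).rootMultiplicity lam = 1)
    (v u : EuclideanSpace ℂ (Fin n)) (hv : v ≠ 0) (hu : u ≠ 0)
    (heig : Matrix.toEuclideanLin A v = lam • v)
    (hleft : Matrix.toEuclideanLin Aᴴ u = (starRingEnd ℂ) lam • u) :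
    sSup {r : ℝ | ∃ Adot : Matrix (Fin n) (Fin n) ℂ, frobNorm Adot = 1 ∧
        r = ‖(inner ℂ (Matrix.toEuclideanLin Adot v) u : ℂ)‖ / ‖(inner ℂ v u : ℂ)‖} =
      ‖u‖ * ‖v‖ / ‖(inner ℂ u v : ℂ)‖ := by
  set C : Matrix (Fin n) (Fin n) ℂ := Matrix.of fun i j => u i * (starRingEnd ℂ) (v j) with hC
  have hCnorm : ‖mEmb C‖ = ‖u‖ * ‖v‖ := norm_mEmb_outer u v
  have hMpos : (0 : ℝ) < ‖u‖ * ‖v‖ :=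
    mul_pos (norm_pos_iff.mpr hu) (norm_pos_iff.mpr hv)
  have hd : ‖(inner ℂ u v : ℂ)‖ = ‖(inner ℂ v u : ℂ)‖ := by
    rw [← inner_conj_symm v u, RCLike.norm_conj]
  apply IsGreatest.csSup_eq
  constructor
  · refine ⟨((‖u‖ * ‖v‖ : ℝ) : ℂ)⁻¹ • C, ?_, ?_⟩
    · rw [frobNorm_eq_norm, mEmb_smul, norm_smul, hCnorm]
      simp only [norm_inv, Complex.norm_real, Real.norm_eq_abs, abs_of_pos hMpos]
      field_simp
    · rw [inner_mEmb_eq, mEmb_smul, inner_smul_left, ← hC,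
        inner_self_eq_norm_sq_to_K, hd]
      congr 1
      rw [norm_mul, RCLike.norm_conj, norm_inv, norm_pow, hCnorm]
      simp only [Complex.norm_real, Real.norm_eq_abs, abs_of_pos hMpos]
      field_simp
      rw [RCLike.norm_ofReal, abs_of_pos hMpos]
      ring
  · rintro r ⟨B, hB, rfl⟩
    rw [hd, div_eq_mul_inv, div_eq_mul_inv]
    apply mul_le_mul_of_nonneg_right _ (inv_nonneg.mpr (norm_nonneg _))
    calc ‖(inner ℂ (Matrix.toEuclideanLin B v) u : ℂ)‖
        = ‖(inner ℂ (mEmb B) (mEmb C) : ℂ)‖ := by rw [inner_mEmb_eq, hC]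
      _ ≤ ‖mEmb B‖ * ‖mEmb C‖ := norm_inner_le_norm _ _
      _ = ‖u‖ * ‖v‖ := by rw [← frobNorm_eq_norm, hB, hCnorm, one_mul]

end
end

section
/- Let A ∈ ℂ^{n×n}, λ ∈ ℂ, and let v ∈ ℂ^n be nonzero with Av = λv and A_{λ,v} invertible. Then the supremum over all Ȧ ∈ ℂ^{n×n} with ‖Ȧ‖_F = 1 of ‖A_{λ,v}^{-1} ( P_{v⊥}(Ȧ v) )‖ / ‖v‖ equals ‖A_{λ,v}^{-1}‖ (the operator norm of the inverse). -/
noncomputable section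

open Matrix Set

lemma aux_sum_sq {n : ℕ} (x : EuclideanSpace ℂ (Fin n)) : ∑ i, ‖x i‖ ^ 2 = ‖x‖ ^ 2 := by
  rw [EuclideanSpace.norm_eq, Real.sq_sqrt]; positivity

lemma aux_key {n : ℕ} (v u : EuclideanSpace ℂ (Fin n)) (hv : v ≠ 0) (hu : u ≠ 0) :
    frobNorm (Matrix.of fun i j => (((‖u‖ * ‖v‖ : ℝ)) : ℂ)⁻¹ * (u i * (starRingEnd ℂ) (v j))) = 1 ∧
    Matrix.toEuclideanLin
        (Matrix.of fun i j => (((‖u‖ * ‖v‖ : ℝ)) : ℂ)⁻¹ * (u i * (starRingEnd ℂ) (v j))) v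
      = (((‖v‖ / ‖u‖ : ℝ)) : ℂ) • u := by
  have hvn : ‖v‖ ≠ 0 := norm_ne_zero_iff.mpr hv
  have hun : ‖u‖ ≠ 0 := norm_ne_zero_iff.mpr hu
  constructor
  · unfold frobNorm
    have h1 : ∀ i j : Fin n, ‖((((‖u‖ * ‖v‖ : ℝ)) : ℂ)⁻¹ * (u i * (starRingEnd ℂ) (v j)))‖ ^ 2
        = (‖u‖ * ‖v‖)⁻¹ ^ 2 * (‖u i‖ ^ 2 * ‖v j‖ ^ 2) := by
      intro i j
      simp [norm_mul, mul_pow, abs_of_nonneg, mul_nonneg (norm_nonneg u) (norm_nonneg v)]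
    simp only [Matrix.of_apply, h1, ← Finset.mul_sum, ← Finset.sum_mul]
    rw [aux_sum_sq, aux_sum_sq]
    rw [show (‖u‖ * ‖v‖)⁻¹ ^ 2 * (‖u‖ ^ 2 * ‖v‖ ^ 2) = 1 by field_simp]
    exact Real.sqrt_one
  · have hinner : ∑ j, (starRingEnd ℂ) (v j) * v j = ((‖v‖ : ℂ)) ^ 2 := by
      have h3 : ∀ j, (starRingEnd ℂ) (v j) * v j = ((‖v j‖ ^ 2 : ℝ) : ℂ) := by
        intro j
        rw [← Complex.normSq_eq_conj_mul_self]
        norm_cast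
        rw [Complex.normSq_eq_norm_sq]
      simp only [h3, ← Complex.ofReal_sum]
      rw [aux_sum_sq]
      push_cast
      ring
    apply PiLp.ext
    intro i
    rw [Matrix.toEuclideanLin_apply]
    simp only [PiLp.toLp_apply, Matrix.mulVec,
      dotProduct, Matrix.of_apply, PiLp.smul_apply, smul_eq_mul]
    have h2 : ∑ j, ((((‖u‖ * ‖v‖ : ℝ)) : ℂ)⁻¹ * (u i * (starRingEnd ℂ) (v j))) * v j
        = (((‖u‖ * ‖v‖ : ℝ)) : ℂ)⁻¹ * (u i * ∑ j, (starRingEnd ℂ) (v j) * v j) := by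
      rw [Finset.mul_sum, Finset.mul_sum]
      exact Finset.sum_congr rfl fun j _ => by ring
    rw [h2, hinner]
    have hvc : (‖v‖ : ℂ) ≠ 0 := by exact_mod_cast hvn
    have huc : (‖u‖ : ℂ) ≠ 0 := by exact_mod_cast hun
    push_cast
    field_simp

lemma aux_opnorm_le_frob {n : ℕ} (A : Matrix (Fin n) (Fin n) ℂ) (x : EuclideanSpace ℂ (Fin n)) :
    ‖Matrix.toEuclideanLin A x‖ ≤ frobNorm A * ‖x‖ := by
  have hcoord : ∀ i, (Matrix.toEuclideanLin A x) i = ∑ j, A i j * x j := fun i => rfl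
  have hbound : ∀ i, ‖(Matrix.toEuclideanLin A x) i‖ ^ 2 ≤ (∑ j, ‖A i j‖ ^ 2) * ‖x‖ ^ 2 := by
    intro i
    rw [hcoord, ← aux_sum_sq]
    calc ‖∑ j, A i j * x j‖ ^ 2 ≤ (∑ j, ‖A i j‖ * ‖x j‖) ^ 2 := by
          apply pow_le_pow_left₀ (norm_nonneg _)
          exact (norm_sum_le _ _).trans (le_of_eq (Finset.sum_congr rfl fun j _ => norm_mul _ _))
      _ ≤ (∑ j, ‖A i j‖ ^ 2) * (∑ j, ‖x j‖ ^ 2) := Finset.sum_mul_sq_le_sq_mul_sq _ _ _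
  rw [EuclideanSpace.norm_eq]
  have h4 : frobNorm A * ‖x‖ = Real.sqrt ((∑ i, ∑ j, ‖A i j‖ ^ 2) * ‖x‖ ^ 2) := by
    rw [Real.sqrt_mul (by positivity), Real.sqrt_sq (norm_nonneg _)]
    rfl
  rw [h4]
  apply Real.sqrt_le_sqrt
  rw [Finset.sum_mul]
  exact Finset.sum_le_sum fun i _ => hbound i

/-- Proposition: the eigenvector condition number equals `‖A_{λ,v}^{-1}‖`. -/
theorem eigenvector_condition_eq {n : ℕ} (A : Matrix (Fin n) (Fin n) ℂ) (lam : ℂ)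
    (v : EuclideanSpace ℂ (Fin n)) (hv : v ≠ 0)
    (heig : Matrix.toEuclideanLin A v = lam • v)
    (hinv : Function.Bijective (Alv A lam v)) :
    sSup {r : ℝ | ∃ Adot : Matrix (Fin n) (Fin n) ℂ, frobNorm Adot = 1 ∧
        r = ‖(AlvC A lam v).inverse
              (((Tv v).orthogonalProjectionOnto) (Matrix.toEuclideanLin Adot v))‖ / ‖v‖} =
      ‖(AlvC A lam v).inverse‖ := by
  classical
  set B := (AlvC A lam v).inverse with hBdef
  set S : Set ℝ := {r : ℝ | ∃ Adot : Matrix (Fin n) (Fin n) ℂ, frobNorm Adot = 1 ∧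
      r = ‖B (((Tv v).orthogonalProjectionOnto) (Matrix.toEuclideanLin Adot v))‖ / ‖v‖} with hSdef
  have hvpos : (0:ℝ) < ‖v‖ := norm_pos_iff.mpr hv
  -- projection contracts
  have hproj : ∀ x : EuclideanSpace ℂ (Fin n),
      ‖((Tv v).orthogonalProjectionOnto x : Tv v)‖ ≤ ‖x‖ := by
    intro x
    calc ‖((Tv v).orthogonalProjectionOnto x : Tv v)‖
        ≤ ‖((Tv v).orthogonalProjectionOnto : _ →L[ℂ] Tv v)‖ * ‖x‖ :=
          ((Tv v).orthogonalProjectionOnto).le_opNorm x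
      _ ≤ 1 * ‖x‖ := by
          apply mul_le_mul_of_nonneg_right (Submodule.orthogonalProjectionOnto_norm_le _) (norm_nonneg x)
      _ = ‖x‖ := one_mul _
  -- upper bound
  have hub : ∀ r ∈ S, r ≤ ‖B‖ := by
    rintro r ⟨Ad, hAd, rfl⟩
    rw [div_le_iff₀ hvpos]
    calc ‖B (((Tv v).orthogonalProjectionOnto) (Matrix.toEuclideanLin Ad v))‖
        ≤ ‖B‖ * ‖(((Tv v).orthogonalProjectionOnto) (Matrix.toEuclideanLin Ad v) : Tv v)‖ :=
          B.le_opNorm _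
      _ ≤ ‖B‖ * ‖Matrix.toEuclideanLin Ad v‖ := by
          exact mul_le_mul_of_nonneg_left (hproj _) (norm_nonneg B)
      _ ≤ ‖B‖ * (frobNorm Ad * ‖v‖) := by
          exact mul_le_mul_of_nonneg_left (aux_opnorm_le_frob _ _) (norm_nonneg B)
      _ = ‖B‖ * ‖v‖ := by rw [hAd, one_mul]
  have hbdd : BddAbove S := ⟨‖B‖, fun r hr => hub r hr⟩
  -- 0 ∈ S (take u = v)
  have h0 : (0:ℝ) ∈ S := by
    obtain ⟨hfrob, happ⟩ := aux_key v v hv hv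
    refine ⟨_, hfrob, ?_⟩
    have hz : (Tv v).orthogonalProjectionOnto v = 0 :=
      Submodule.orthogonalProjectionOnto_orthogonal_apply_eq_zero
        (Submodule.mem_span_singleton_self v)
    rw [happ, _root_.map_smul, hz]
    simp
  -- membership for w ∈ Tv v, w ≠ 0
  have hmem : ∀ w : Tv v, w ≠ 0 → ‖B w‖ / ‖(w : EuclideanSpace ℂ (Fin n))‖ ∈ S := by
    intro w hw
    have hw' : (w : EuclideanSpace ℂ (Fin n)) ≠ 0 := by
      simpa [Submodule.coe_eq_zero] using hw
    obtain ⟨hfrob, happ⟩ := aux_key v (w : EuclideanSpace ℂ (Fin n)) hv hw'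
    refine ⟨_, hfrob, ?_⟩
    rw [happ, _root_.map_smul, Submodule.orthogonalProjectionOnto_mem_subspace_eq_self, B.map_smul]
    have hwpos : (0:ℝ) < ‖(w : EuclideanSpace ℂ (Fin n))‖ := norm_pos_iff.mpr hw'
    rw [norm_smul]
    rw [show ‖(((‖v‖ / ‖(w : EuclideanSpace ℂ (Fin n))‖ : ℝ)) : ℂ)‖
        = ‖v‖ / ‖(w : EuclideanSpace ℂ (Fin n))‖ by
      rw [Complex.norm_real, Real.norm_of_nonneg (by positivity)]]
    field_simp
  apply le_antisymm
  · exact csSup_le ⟨0, h0⟩ hub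
  · have hnn : (0:ℝ) ≤ sSup S := le_csSup hbdd h0
    apply ContinuousLinearMap.opNorm_le_bound B hnn
    intro w
    rcases eq_or_ne w 0 with rfl | hw
    · simp
    · have hwpos : (0:ℝ) < ‖w‖ := norm_pos_iff.mpr hw
      have : ‖B w‖ / ‖w‖ ≤ sSup S := by
        have hw2 : ‖B w‖ / ‖(w : EuclideanSpace ℂ (Fin n))‖ ∈ S := hmem w hw
        exact le_csSup hbdd hw2
      calc ‖B w‖ = (‖B w‖ / ‖w‖) * ‖w‖ := (div_mul_cancel₀ ‖B w‖ hwpos.ne').symm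
        _ ≤ sSup S * ‖w‖ := mul_le_mul_of_nonneg_right this (norm_nonneg w)


end
end
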